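/- arXiv:1102.1088 — 2 statements merged into one kernel-verified Lean document; each statement's English description precedes it below -/
import Mathlib

section
/- Let (A, τ) be a subdirectly irreducible SMV-algebra. Then F_τ(A) := {a : τ(a) = 1} and τ(A) have the disjunction property: for x ∈ F_τ(A) and y ∈ τ(A), if x ∨ y = 1 then x = 1 or y = 1. -/
/-- An MV-algebra `(A, ⊕, ¬, 0)`. -/
class MV (A : Type*) extends Zero A where
  oplus : A → A → A
  mvneg : A → A
  oplus_assoc : ∀ x y z : A, oplus (oplus x y) z = oplus x (oplus y z)
  oplus_comm : ∀ x y : A, oplus x y = oplus y x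
  oplus_zero : ∀ x : A, oplus x 0 = x
  mvneg_mvneg : ∀ x : A, mvneg (mvneg x) = x
  oplus_top : ∀ x : A, oplus x (mvneg 0) = mvneg 0
  luk : ∀ x y : A, oplus (mvneg (oplus (mvneg x) y)) y = oplus (mvneg (oplus (mvneg y) x)) x

namespace MV

variable {A : Type*} [MV A]

/-- The top element `1 = ¬0`. -/
def top : A := mvneg 0
/-- `x → y := ¬x ⊕ y`. -/
def imp (x y : A) : A := oplus (mvneg x) y
/-- `x ⊙ y := ¬(¬x ⊕ ¬y)`. -/
def odot (x y : A) : A := mvneg (oplus (mvneg x) (mvneg y))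
/-- `x ⊖ y := ¬(¬x ⊕ y)`. -/
def ominus (x y : A) : A := mvneg (oplus (mvneg x) y)
/-- Lattice join `x ∨ y := (x → y) → y`. -/
def mvsup (x y : A) : A := imp (imp x y) y
/-- Lattice meet `x ∧ y := x ⊙ (x → y)`. -/
def mvinf (x y : A) : A := odot x (imp x y)
/-- The lattice order: `x ≤ y` iff `x → y = 1`. -/
def mvle (x y : A) : Prop := imp x y = top
/-- Strict order. -/
def mvlt (x y : A) : Prop := mvle x y ∧ x ≠ y

/-- `(A, τ)` is an SMV-algebra. -/
structure IsSMV (τ : A → A) : Prop where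
  map_top : τ top = top
  tau_oplus : ∀ x y : A, τ (oplus x y) = oplus (τ x) (τ (ominus y (odot x y)))
  map_neg : ∀ x : A, τ (mvneg x) = mvneg (τ x)
  tau_fix : ∀ x y : A, τ (oplus (τ x) (τ y)) = oplus (τ x) (τ y)

/-- `(A, τ)` is a state morphism MV-algebra. -/
def IsSMMV (τ : A → A) : Prop := IsSMV τ ∧ ∀ x y : A, τ (oplus x y) = oplus (τ x) (τ y)

/-- An MV-filter. -/
structure IsFilter (F : Set A) : Prop where
  top_mem : top ∈ F
  mp : ∀ a b : A, a ∈ F → imp a b ∈ F → b ∈ F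

/-- A `τ`-filter: an MV-filter closed under `τ`. -/
def IsTauFilter (τ : A → A) (F : Set A) : Prop := IsFilter F ∧ ∀ a ∈ F, τ a ∈ F

/-- Subdirect irreducibility of an SMV-algebra: there is a minimum nontrivial `τ`-filter. -/
def SubdirIrrSMV (τ : A → A) : Prop :=
  ∃ F : Set A, IsTauFilter τ F ∧ F ≠ {top} ∧
    ∀ G : Set A, IsTauFilter τ G → G ≠ {top} → F ⊆ G

/-- A filter of the subalgebra/subhoop with universe `S`. -/
def IsFilterOn (S F : Set A) : Prop :=
  F ⊆ S ∧ top ∈ F ∧ ∀ a b : A, a ∈ F → b ∈ S → imp a b ∈ F → b ∈ F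

/-- Subdirect irreducibility of the subalgebra/subhoop with universe `S`:
there is a minimum nontrivial filter on `S`. -/
def SubdirIrrOn (S : Set A) : Prop :=
  ∃ F : Set A, IsFilterOn S F ∧ F ≠ {top} ∧
    ∀ G : Set A, IsFilterOn S G → G ≠ {top} → F ⊆ G

/-- The set `F_τ(A) = {a : τ a = 1}`. -/
def tauKernel (τ : A → A) : Set A := {a : A | τ a = top}

/-- Homomorphisms of MV-algebras. -/
structure IsMVHom {A B : Type*} [MV A] [MV B] (f : A → B) : Prop where
  map_oplus : ∀ x y : A, f (oplus x y) = oplus (f x) (f y)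
  map_neg : ∀ x : A, f (mvneg x) = mvneg (f x)
  map_zero : f 0 = 0

end MV

open MV

instance MV.instProd {A B : Type*} [MV A] [MV B] : MV (A × B) where
  oplus x y := (oplus x.1 y.1, oplus x.2 y.2)
  mvneg x := (mvneg x.1, mvneg x.2)
  oplus_assoc x y z := by simp [oplus_assoc]
  oplus_comm x y := by simp [oplus_comm x.1 y.1, oplus_comm x.2 y.2]
  oplus_zero x := by simp [oplus_zero]
  mvneg_mvneg x := by simp [mvneg_mvneg]
  oplus_top x := by simp [oplus_top]
  luk x y := by simp [luk]

instance MV.instPi {I : Type*} {A : I → Type*} [∀ i, MV (A i)] : MV (∀ i, A i) where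
  oplus x y i := oplus (x i) (y i)
  mvneg x i := mvneg (x i)
  oplus_assoc x y z := by funext i; simp [oplus_assoc]
  oplus_comm x y := by funext i; exact oplus_comm _ _
  oplus_zero x := by funext i; exact oplus_zero _
  mvneg_mvneg x := by funext i; exact mvneg_mvneg _
  oplus_top x := by funext i; exact oplus_top _
  luk x y := by funext i; exact luk _ _

section MVAuxiliary

variable {A : Type*} [MV A]

lemma mv_zero_oplus (x : A) : oplus 0 x = x := by rw [oplus_comm, oplus_zero]

lemma mv_oplus_top' (x : A) : oplus x (top : A) = top := oplus_top x

lemma mv_top_oplus (x : A) : oplus (top : A) x = top := by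
  rw [oplus_comm]; exact mv_oplus_top' x

lemma mv_neg_top : mvneg (top : A) = 0 := mvneg_mvneg 0

lemma mv_neg_oplus_self (x : A) : oplus (mvneg x) x = top := by
  have h := luk x (top : A)
  rw [mv_oplus_top', mv_neg_top, mv_zero_oplus] at h
  exact h.symm

lemma mv_oplus_neg_self (x : A) : oplus x (mvneg x) = top := by
  rw [oplus_comm]; exact mv_neg_oplus_self x

lemma mv_mvle_of_exists {x y : A} (h : ∃ z, y = oplus x z) : mvle x y := by
  obtain ⟨z, hz⟩ := h
  show oplus (mvneg x) y = top
  rw [hz, ← oplus_assoc, mv_neg_oplus_self, mv_top_oplus]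

lemma mv_exists_of_mvle {x y : A} (hle : mvle x y) : ∃ z, y = oplus x z := by
  have h := luk x y
  have hle' : oplus (mvneg x) y = top := hle
  rw [hle', mv_neg_top, mv_zero_oplus] at h
  exact ⟨mvneg (oplus (mvneg y) x), by rw [oplus_comm]; exact h⟩

lemma mv_mvle_refl (x : A) : mvle x x := mv_neg_oplus_self x

lemma mv_mvle_top (x : A) : mvle x top := oplus_top (mvneg x)

lemma mv_eq_top_of_top_mvle {x : A} (h : mvle top x) : x = top := by
  obtain ⟨z, hz⟩ := mv_exists_of_mvle h
  rw [hz, mv_top_oplus]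

lemma mv_mvle_trans {x y z : A} (h1 : mvle x y) (h2 : mvle y z) : mvle x z := by
  obtain ⟨u, hu⟩ := mv_exists_of_mvle h1
  obtain ⟨v, hv⟩ := mv_exists_of_mvle h2
  exact mv_mvle_of_exists ⟨oplus u v, by rw [hv, hu, oplus_assoc]⟩

lemma mv_mvle_oplus_right (x z : A) : mvle x (oplus x z) := mv_mvle_of_exists ⟨z, rfl⟩

lemma mv_oplus_mvle_oplus_left {a b : A} (c : A) (h : mvle a b) :
    mvle (oplus a c) (oplus b c) := by
  obtain ⟨w, hb⟩ := mv_exists_of_mvle h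
  refine mv_mvle_of_exists ⟨w, ?_⟩
  rw [hb, oplus_assoc, oplus_comm w c, ← oplus_assoc]

lemma mv_oplus_mvle_oplus_right (c : A) {a b : A} (h : mvle a b) :
    mvle (oplus c a) (oplus c b) := by
  rw [oplus_comm c a, oplus_comm c b]
  exact mv_oplus_mvle_oplus_left c h

lemma mv_oplus_mvle_oplus {a b c d : A} (h1 : mvle a b) (h2 : mvle c d) :
    mvle (oplus a c) (oplus b d) :=
  mv_mvle_trans (mv_oplus_mvle_oplus_left c h1) (mv_oplus_mvle_oplus_right b h2)

lemma mv_neg_mvle_neg {x y : A} (h : mvle x y) : mvle (mvneg y) (mvneg x) := by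
  show oplus (mvneg (mvneg y)) (mvneg x) = top
  rw [mvneg_mvneg, oplus_comm]
  exact h

lemma mv_odot_comm (x y : A) : odot x y = odot y x := by
  unfold odot; rw [oplus_comm]

lemma mv_odot_top (x : A) : odot x top = x := by
  show mvneg (oplus (mvneg x) (mvneg top)) = x
  rw [mv_neg_top, oplus_zero, mvneg_mvneg]

lemma mv_top_odot (x : A) : odot top x = x := by rw [mv_odot_comm, mv_odot_top]

lemma mv_odot_assoc (x y z : A) : odot (odot x y) z = odot x (odot y z) := by
  unfold odot
  rw [mvneg_mvneg, mvneg_mvneg, oplus_assoc]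

lemma mv_odot_mvle_left (x y : A) : mvle (odot x y) x := by
  show oplus (mvneg (mvneg (oplus (mvneg x) (mvneg y)))) x = top
  rw [mvneg_mvneg, oplus_comm (mvneg x) (mvneg y), oplus_assoc, mv_neg_oplus_self,
    mv_oplus_top']

lemma mv_odot_mvle_odot {a b c d : A} (h1 : mvle a b) (h2 : mvle c d) :
    mvle (odot a c) (odot b d) :=
  mv_neg_mvle_neg (mv_oplus_mvle_oplus (mv_neg_mvle_neg h1) (mv_neg_mvle_neg h2))

lemma mv_mvsup_comm (x y : A) : mvsup x y = mvsup y x := luk x y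

lemma mv_mvle_mvsup_right (x y : A) : mvle y (mvsup x y) :=
  mv_mvle_of_exists ⟨mvneg (imp x y), oplus_comm (mvneg (imp x y)) y⟩

lemma mv_mvle_mvsup_left (x y : A) : mvle x (mvsup x y) := by
  rw [mv_mvsup_comm]; exact mv_mvle_mvsup_right y x

lemma mv_mvsup_of_mvle {x y : A} (h : mvle x y) : mvsup x y = y := by
  show oplus (mvneg (imp x y)) y = y
  rw [(h : imp x y = top), mv_neg_top, mv_zero_oplus]

lemma mv_mvsup_mvle_mvsup_right {y u : A} (x : A) (h : mvle y u) :
    mvle (mvsup x y) (mvsup x u) := by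
  rw [mv_mvsup_comm x y, mv_mvsup_comm x u]
  exact mv_oplus_mvle_oplus_left x
    (mv_neg_mvle_neg (mv_oplus_mvle_oplus_left x (mv_neg_mvle_neg h)))

lemma mv_mvsup_mvle {x y u : A} (h1 : mvle x u) (h2 : mvle y u) : mvle (mvsup x y) u := by
  have h3 := mv_mvsup_mvle_mvsup_right x h2
  rw [mv_mvsup_of_mvle h1] at h3
  exact h3

lemma mv_oplus_left_comm (x y z : A) : oplus x (oplus y z) = oplus y (oplus x z) := by
  rw [← oplus_assoc, oplus_comm x y, oplus_assoc]

lemma mv_resid {x y z : A} : mvle (odot x y) z ↔ mvle y (imp x z) := by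
  have e : oplus (mvneg (odot x y)) z = oplus (mvneg y) (oplus (mvneg x) z) := by
    show oplus (mvneg (mvneg (oplus (mvneg x) (mvneg y)))) z = _
    rw [mvneg_mvneg, oplus_assoc, mv_oplus_left_comm]
  show (oplus (mvneg (odot x y)) z = top) ↔ (oplus (mvneg y) (oplus (mvneg x) z) = top)
  rw [e]

lemma mv_odot_imp_mvle (a b : A) : mvle (odot a (imp a b)) b :=
  mv_resid.mpr (mv_mvle_refl _)

lemma mv_odot_mvsup_mvle (a b c : A) :
    mvle (odot a (mvsup b c)) (mvsup (odot a b) (odot a c)) := by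
  refine mv_resid.mpr (mv_mvsup_mvle ?_ ?_)
  · exact mv_resid.mp (mv_mvle_mvsup_left _ _)
  · exact mv_resid.mp (mv_mvle_mvsup_right _ _)

lemma mv_sup_odot_sup_mvle (a b c : A) :
    mvle (odot (mvsup a b) (mvsup c b)) (mvsup (odot a c) b) := by
  refine mv_mvle_trans (mv_odot_mvsup_mvle (mvsup a b) c b) (mv_mvsup_mvle ?_ ?_)
  · have h2 : mvle (odot (mvsup a b) c) (mvsup (odot c a) (odot c b)) := by
      rw [mv_odot_comm]; exact mv_odot_mvsup_mvle c a b
    refine mv_mvle_trans h2 (mv_mvsup_mvle ?_ ?_)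
    · rw [mv_odot_comm]; exact mv_mvle_mvsup_left _ _
    · rw [mv_odot_comm]
      exact mv_mvle_trans (mv_odot_mvle_left b c) (mv_mvle_mvsup_right _ _)
  · refine mv_mvle_trans ?_ (mv_mvle_mvsup_right (odot a c) b)
    rw [mv_odot_comm]; exact mv_odot_mvle_left b _

/-- Powers with respect to `⊙`. -/
def mvpow (x : A) : ℕ → A := fun n => Nat.rec top (fun _ ih => odot x ih) n

lemma mvpow_zero (x : A) : mvpow x 0 = top := rfl
lemma mvpow_succ (x : A) (n : ℕ) : mvpow x (n + 1) = odot x (mvpow x n) := rfl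

lemma mvpow_top : ∀ n : ℕ, mvpow (top : A) n = top
  | 0 => rfl
  | n + 1 => by rw [mvpow_succ, mvpow_top n, mv_odot_top]

lemma mvpow_add (x : A) (m n : ℕ) : mvpow x (m + n) = odot (mvpow x m) (mvpow x n) := by
  induction m with
  | zero => rw [mvpow_zero, mv_top_odot, Nat.zero_add]
  | succ m ih => rw [Nat.succ_add, mvpow_succ, mvpow_succ, ih, mv_odot_assoc]

lemma mv_mvsup_pw_left {x y : A} (hs : mvsup x y = top) :
    ∀ m : ℕ, mvsup (mvpow x m) y = top := by
  intro m
  induction m with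
  | zero => exact mv_eq_top_of_top_mvle (mv_mvle_mvsup_left top y)
  | succ m ih =>
    have h1 := mv_sup_odot_sup_mvle (mvpow x m) y x
    rw [ih, hs, mv_odot_top] at h1
    rw [mvpow_succ, mv_odot_comm]
    exact mv_eq_top_of_top_mvle h1

lemma mv_mvsup_pw {x y : A} (hs : mvsup x y = top) (m n : ℕ) :
    mvsup (mvpow x m) (mvpow y n) = top := by
  have h1 : mvsup y (mvpow x m) = top := by
    rw [mv_mvsup_comm]; exact mv_mvsup_pw_left hs m
  have h2 := mv_mvsup_pw_left h1 n
  rw [mv_mvsup_comm] at h2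
  exact h2

lemma mv_ominus_mvle_left (v c : A) : mvle (ominus v c) v := by
  have h2 := mv_neg_mvle_neg (mv_mvle_oplus_right (mvneg v) c)
  rw [mvneg_mvneg] at h2
  exact h2

/- τ lemmas -/
variable {τ : A → A}

lemma mv_tau_zero (h : IsSMV τ) : τ 0 = 0 := by
  have h1 := h.map_neg top
  rw [h.map_top, mv_neg_top] at h1
  exact h1

lemma mv_tau_idem (h : IsSMV τ) (x : A) : τ (τ x) = τ x := by
  have h1 := h.tau_fix x 0
  rw [mv_tau_zero h, oplus_zero] at h1
  exact h1

lemma mv_tau_mono (h : IsSMV τ) {a b : A} (hab : mvle a b) : mvle (τ a) (τ b) := by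
  obtain ⟨w, hb⟩ := mv_exists_of_mvle hab
  refine mv_mvle_of_exists ⟨τ (ominus w (odot a w)), ?_⟩
  rw [hb, h.tau_oplus]

lemma mv_tau_suboplus (h : IsSMV τ) (u v : A) :
    mvle (τ (oplus u v)) (oplus (τ u) (τ v)) := by
  rw [h.tau_oplus]
  exact mv_oplus_mvle_oplus_right (τ u)
    (mv_tau_mono h (mv_ominus_mvle_left v (odot u v)))

lemma mv_tau_superodot (h : IsSMV τ) (a b : A) :
    mvle (odot (τ a) (τ b)) (τ (odot a b)) := by
  have h1 := mv_neg_mvle_neg (mv_tau_suboplus h (mvneg a) (mvneg b))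
  rw [← h.map_neg (oplus (mvneg a) (mvneg b))] at h1
  rw [h.map_neg a, h.map_neg b] at h1
  exact h1

lemma mv_pw_tau_mvle (h : IsSMV τ) (x : A) :
    ∀ n : ℕ, mvle (mvpow (τ x) n) (τ (mvpow x n)) := by
  intro n
  induction n with
  | zero =>
    show mvle top (τ top)
    rw [h.map_top]; exact mv_mvle_refl top
  | succ n ih =>
    rw [mvpow_succ, mvpow_succ]
    exact mv_mvle_trans (mv_odot_mvle_odot (mv_mvle_refl (τ x)) ih)
      (mv_tau_superodot h x (mvpow x n))

lemma mv_tau_pw_top (h : IsSMV τ) {x : A} (hx : τ x = top) (n : ℕ) :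
    τ (mvpow x n) = top := by
  have h1 := mv_pw_tau_mvle h x n
  rw [hx, mvpow_top] at h1
  exact mv_eq_top_of_top_mvle h1

/- generated filters -/

def mvfgen (x : A) : Set A := {a : A | ∃ n : ℕ, mvle (mvpow x n) a}

lemma mv_mem_fgen (x : A) : x ∈ mvfgen x := by
  refine ⟨1, ?_⟩
  show mvle (odot x top) x
  rw [mv_odot_top]
  exact mv_mvle_refl x

lemma mv_fgen_filter (x : A) : IsFilter (mvfgen x) := by
  constructor
  · exact ⟨0, mv_mvle_top top⟩
  · rintro a b ⟨n, hn⟩ ⟨m, hm⟩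
    refine ⟨n + m, ?_⟩
    rw [mvpow_add]
    exact mv_mvle_trans (mv_odot_mvle_odot hn hm) (mv_odot_imp_mvle a b)

lemma mv_exists_ne_top {F : Set A} (htop : (top : A) ∈ F) (hne : F ≠ {top}) :
    ∃ c ∈ F, c ≠ top := by
  by_contra hc
  push_neg at hc
  apply hne
  ext a
  constructor
  · intro ha; exact Set.mem_singleton_iff.mpr (hc a ha)
  · intro ha; rw [Set.mem_singleton_iff] at ha; rw [ha]; exact htop

end MVAuxiliary

/-- If `(A, τ)` is a subdirectly irreducible SMV-algebra, then
`F_τ(A)` and `τ(A)` have the disjunction property. -/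
theorem disjunction_property {A : Type*} [MV A] (τ : A → A)
    (h : IsSMV τ) (hsi : SubdirIrrSMV τ) :
    ∀ x y : A, x ∈ tauKernel τ → y ∈ Set.range τ → mvsup x y = top →
      x = top ∨ y = top := by
  intro x y hx hy hsup
  by_contra hcon
  push_neg at hcon
  obtain ⟨hxne, hyne⟩ := hcon
  obtain ⟨z, hz⟩ := hy
  have hxk : τ x = top := hx
  have hyfix : τ y = y := by rw [← hz]; exact mv_tau_idem h z
  obtain ⟨F, ⟨hFf, hFt⟩, hFne, hFmin⟩ := hsi
  have hGx : IsTauFilter τ (mvfgen x) := by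
    refine ⟨mv_fgen_filter x, ?_⟩
    rintro a ⟨n, hn⟩
    have h1 : mvle (τ (mvpow x n)) (τ a) := mv_tau_mono h hn
    rw [mv_tau_pw_top h hxk n] at h1
    exact ⟨0, h1⟩
  have hGy : IsTauFilter τ (mvfgen y) := by
    refine ⟨mv_fgen_filter y, ?_⟩
    rintro a ⟨n, hn⟩
    refine ⟨n, mv_mvle_trans ?_ (mv_tau_mono h hn)⟩
    have h1 := mv_pw_tau_mvle h y n
    rw [hyfix] at h1
    exact h1
  have hGxne : mvfgen x ≠ {top} := by
    intro he
    exact hxne (Set.mem_singleton_iff.mp (he ▸ mv_mem_fgen x))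
  have hGyne : mvfgen y ≠ {top} := by
    intro he
    exact hyne (Set.mem_singleton_iff.mp (he ▸ mv_mem_fgen y))
  obtain ⟨c, hcF, hcne⟩ := mv_exists_ne_top hFf.top_mem hFne
  obtain ⟨m, hm⟩ := hFmin _ hGx hGxne hcF
  obtain ⟨n, hn⟩ := hFmin _ hGy hGyne hcF
  have hst := mv_mvsup_pw hsup m n
  have htc : mvle top c := by rw [← hst]; exact mv_mvsup_mvle hm hn
  exact hcne (mv_eq_top_of_top_mvle htc)
end

section
/- Let (A, τ) be an SMV-algebra such that: (i) if F_τ(A) = {1} then τ(A) is a subdirectly irreducible MV-algebra; (ii) the Wajsberg hoop F_τ(A) is trivial or subdirectly irreducible; (iii) F_τ(A) and τ(A) have the disjunction property. Then (A, τ) is subdirectly irreducible. -/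
open MV

namespace MV
section Aux

variable {A : Type*} [MV A]

lemma neg_top : mvneg (top : A) = 0 := by rw [top, mvneg_mvneg]

lemma zero_oplus (x : A) : oplus 0 x = x := by rw [oplus_comm, oplus_zero]

lemma top_oplus (x : A) : oplus top x = top := by
  rw [oplus_comm]; exact oplus_top x

lemma oplus_top' (x : A) : oplus x top = top := oplus_top x

lemma neg_oplus_self (x : A) : oplus (mvneg x) x = top := by
  have h := luk x ((mvneg 0) : A)
  rw [oplus_top, mvneg_mvneg, zero_oplus] at h
  exact h.symm

lemma mvle_refl (x : A) : mvle x x := neg_oplus_self x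

lemma mvle_top (x : A) : mvle x top := by
  show oplus (mvneg x) top = top; exact oplus_top' _

lemma zero_mvle (x : A) : mvle 0 x := by
  show oplus (mvneg 0) x = top
  rw [show (mvneg 0 : A) = top from rfl]; exact top_oplus x

lemma mvle_oplus_right (x c : A) : mvle x (oplus x c) := by
  show oplus (mvneg x) (oplus x c) = top
  rw [← oplus_assoc, neg_oplus_self, top_oplus]

lemma mvsup_eq_luk (x y : A) : mvsup x y = oplus x (ominus y x) := by
  unfold mvsup imp ominus
  rw [luk, oplus_comm]

lemma mvle_antisymm {x y : A} (h1 : mvle x y) (h2 : mvle y x) : x = y := by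
  have h := luk x y
  have h1' : oplus (mvneg x) y = top := h1
  have h2' : oplus (mvneg y) x = top := h2
  rw [h1', h2', neg_top, zero_oplus, zero_oplus] at h
  exact h.symm

lemma eq_top_of_top_mvle {x : A} (h : mvle top x) : x = top :=
  (mvle_antisymm h (mvle_top x)).symm

lemma mvle_iff_exists {x y : A} : mvle x y ↔ ∃ c, y = oplus x c := by
  constructor
  · intro hxy
    refine ⟨ominus y x, ?_⟩
    have hs := mvsup_eq_luk x y
    have hxy' : oplus (mvneg x) y = top := hxy
    unfold mvsup imp at hs
    rw [hxy', neg_top, zero_oplus] at hs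
    exact hs
  · rintro ⟨c, rfl⟩; exact mvle_oplus_right x c

lemma mvle_trans {x y z : A} (h1 : mvle x y) (h2 : mvle y z) : mvle x z := by
  obtain ⟨c, rfl⟩ := mvle_iff_exists.1 h1
  obtain ⟨d, rfl⟩ := mvle_iff_exists.1 h2
  exact mvle_iff_exists.2 ⟨oplus c d, oplus_assoc x c d⟩

lemma mvneg_antitone {x y : A} (hxy : mvle x y) : mvle (mvneg y) (mvneg x) := by
  show oplus (mvneg (mvneg y)) (mvneg x) = top
  rw [mvneg_mvneg, oplus_comm]; exact hxy

lemma oplus_mono_right {x y : A} (z : A) (hxy : mvle x y) :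
    mvle (oplus z x) (oplus z y) := by
  obtain ⟨c, rfl⟩ := mvle_iff_exists.1 hxy
  exact mvle_iff_exists.2 ⟨c, (oplus_assoc z x c).symm⟩

lemma oplus_mono_left {x y : A} (z : A) (hxy : mvle x y) :
    mvle (oplus x z) (oplus y z) := by
  rw [oplus_comm x z, oplus_comm y z]
  exact oplus_mono_right z hxy

lemma oplus_mono {x y x' y' : A} (hx : mvle x x') (hy : mvle y y') :
    mvle (oplus x y) (oplus x' y') :=
  mvle_trans (oplus_mono_right x hy) (oplus_mono_left y' hx)

lemma odot_mono {x y x' y' : A} (hx : mvle x x') (hy : mvle y y') :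
    mvle (odot x y) (odot x' y') := by
  unfold odot
  exact mvneg_antitone (oplus_mono (mvneg_antitone hx) (mvneg_antitone hy))

lemma ominus_mvle (a b : A) : mvle (ominus a b) a := by
  show oplus (mvneg (mvneg (oplus (mvneg a) b))) a = top
  rw [mvneg_mvneg, oplus_comm (mvneg a) b, oplus_assoc, neg_oplus_self, oplus_top']

lemma odot_imp_mvle (a b : A) : mvle (odot a (imp a b)) b := by
  show oplus (mvneg (odot a (imp a b))) b = top
  unfold odot imp
  rw [mvneg_mvneg, oplus_assoc, luk, oplus_comm (mvneg (oplus (mvneg b) a)) a,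
    ← oplus_assoc, neg_oplus_self, top_oplus]

lemma mvle_mvsup_right (x y : A) : mvle y (mvsup x y) :=
  mvle_iff_exists.2 ⟨mvneg (oplus (mvneg x) y), oplus_comm _ _⟩

lemma mvle_mvsup_left (x y : A) : mvle x (mvsup x y) := by
  rw [mvsup_eq_luk]; exact mvle_oplus_right _ _

lemma exists_ne_top {F : Set A} (htop : (top : A) ∈ F) (hne : F ≠ {top}) :
    ∃ x ∈ F, x ≠ top := by
  by_contra hc
  push_neg at hc
  apply hne
  ext z
  simp only [Set.mem_singleton_iff]
  exact ⟨fun hz => hc z hz, fun hz => hz ▸ htop⟩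

lemma IsFilter.mem_of_mvle {F : Set A} (hF : IsFilter F) {a b : A}
    (ha : a ∈ F) (hab : mvle a b) : b ∈ F := by
  refine hF.mp a b ha ?_
  have h : imp a b = top := hab
  rw [h]; exact hF.top_mem

variable {τ : A → A}

lemma IsSMV.tau_zero (h : IsSMV τ) : τ 0 = 0 := by
  have hn := h.map_neg (top : A)
  rw [neg_top, h.map_top, neg_top] at hn
  exact hn

lemma IsSMV.tau_idem (h : IsSMV τ) (x : A) : τ (τ x) = τ x := by
  have hf := h.tau_fix x 0
  rw [h.tau_zero, oplus_zero] at hf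
  exact hf

lemma IsSMV.tau_mono (h : IsSMV τ) {x y : A} (hxy : mvle x y) :
    mvle (τ x) (τ y) := by
  obtain ⟨c, rfl⟩ := mvle_iff_exists.1 hxy
  rw [h.tau_oplus]
  exact mvle_oplus_right _ _

lemma IsSMV.tau_odot_top (h : IsSMV τ) {x y : A} (hx : τ x = top) (hy : τ y = top) :
    τ (odot x y) = top := by
  have h3 : mvneg (odot x y) = oplus (mvneg x) (mvneg y) := by
    unfold odot; rw [mvneg_mvneg]
  have h1 : mvneg (τ (odot x y)) =
      τ (ominus (mvneg y) (odot (mvneg x) (mvneg y))) := by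
    rw [← h.map_neg, h3, h.tau_oplus, h.map_neg, hx, neg_top, zero_oplus]
  have h5 := h.tau_mono (ominus_mvle (mvneg y) (odot (mvneg x) (mvneg y)))
  rw [h.map_neg, hy, neg_top] at h5
  have h6 : τ (ominus (mvneg y) (odot (mvneg x) (mvneg y))) = 0 :=
    mvle_antisymm h5 (zero_mvle _)
  rw [h6] at h1
  have h7 := congrArg mvneg h1
  rw [mvneg_mvneg] at h7
  exact h7

lemma IsSMV.range_top_mem (h : IsSMV τ) : (top : A) ∈ Set.range τ :=
  ⟨top, h.map_top⟩

lemma IsSMV.range_neg_mem (h : IsSMV τ) {a : A} (ha : a ∈ Set.range τ) :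
    mvneg a ∈ Set.range τ := by
  obtain ⟨u, rfl⟩ := ha
  exact ⟨mvneg u, h.map_neg u⟩

lemma IsSMV.range_oplus_mem (h : IsSMV τ) {a b : A} (ha : a ∈ Set.range τ)
    (hb : b ∈ Set.range τ) : oplus a b ∈ Set.range τ := by
  obtain ⟨u, rfl⟩ := ha
  obtain ⟨v, rfl⟩ := hb
  exact ⟨oplus (τ u) (τ v), h.tau_fix u v⟩

lemma IsSMV.range_odot_mem (h : IsSMV τ) {a b : A} (ha : a ∈ Set.range τ)
    (hb : b ∈ Set.range τ) : odot a b ∈ Set.range τ :=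
  h.range_neg_mem (h.range_oplus_mem (h.range_neg_mem ha) (h.range_neg_mem hb))

lemma IsSMV.range_imp_mem (h : IsSMV τ) {a b : A} (ha : a ∈ Set.range τ)
    (hb : b ∈ Set.range τ) : imp a b ∈ Set.range τ :=
  h.range_oplus_mem (h.range_neg_mem ha) hb

lemma imp_imp_odot (f f' : A) : imp f (imp f' (odot f f')) = top := by
  unfold imp odot
  rw [← oplus_assoc, oplus_comm (oplus (mvneg f) (mvneg f')), neg_oplus_self]

end Aux
end MV
/-- Converse characterization: an SMV-algebra satisfying conditions
(i), (ii), (iii) is subdirectly irreducible. -/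
theorem subdirectly_irreducible_of_conditions {A : Type*} [MV A] (τ : A → A)
    (h : IsSMV τ)
    (h1 : tauKernel τ = ({top} : Set A) → SubdirIrrOn (Set.range τ))
    (h2 : tauKernel τ = ({top} : Set A) ∨ SubdirIrrOn (tauKernel τ))
    (h3 : ∀ x y : A, x ∈ tauKernel τ → y ∈ Set.range τ → mvsup x y = top →
      x = top ∨ y = top) :
    SubdirIrrSMV τ := by
  by_cases hk : tauKernel τ = ({top} : Set A)
  · -- Case A : F_τ(A) = {1}; use the minimal filter of τ(A)
    obtain ⟨F, hFon, hFne, hFmin⟩ := h1 hk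
    obtain ⟨hFS, hFtop, hFmp⟩ := hFon
    -- F is closed under ⊙
    have hdot : ∀ f f', f ∈ F → f' ∈ F → odot f f' ∈ F := by
      intro f f' hf hf'
      have hfS := hFS hf
      have hf'S := hFS hf'
      have hoS : odot f f' ∈ Set.range τ := h.range_odot_mem hfS hf'S
      have hXS : imp f' (odot f f') ∈ Set.range τ := h.range_imp_mem hf'S hoS
      have hX : imp f' (odot f f') ∈ F := by
        refine hFmp f _ hf hXS ?_
        rw [imp_imp_odot]; exact hFtop
      exact hFmp f' _ hf' hoS hX
    refine ⟨{b | ∃ f ∈ F, mvle f b}, ⟨⟨?_, ?_⟩, ?_⟩, ?_, ?_⟩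
    · exact ⟨top, hFtop, mvle_refl top⟩
    · rintro a b ⟨f, hf, hfa⟩ ⟨f', hf', hf'ab⟩
      refine ⟨odot f f', hdot f f' hf hf', ?_⟩
      exact mvle_trans (odot_mono hfa hf'ab) (odot_imp_mvle a b)
    · rintro b ⟨f, hf, hfb⟩
      have hfr := hFS hf
      obtain ⟨u, hu⟩ := hfr
      have hτf : τ f = f := by rw [← hu, h.tau_idem]
      refine ⟨f, hf, ?_⟩
      have := h.tau_mono hfb
      rwa [hτf] at this
    · obtain ⟨x0, hx0F, hx0⟩ := exists_ne_top hFtop hFne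
      intro hEq
      have hx0m : x0 ∈ {b | ∃ f ∈ F, mvle f b} := ⟨x0, hx0F, mvle_refl x0⟩
      rw [hEq] at hx0m
      exact hx0 hx0m
    · intro G hG hGne
      obtain ⟨g, hgG, hgne⟩ := exists_ne_top hG.1.top_mem hGne
      have hτgG : τ g ∈ G := hG.2 g hgG
      have hτgne : τ g ≠ top := by
        intro hE
        have : g ∈ tauKernel τ := hE
        rw [hk] at this
        exact hgne this
      have hG'on : IsFilterOn (Set.range τ) (G ∩ Set.range τ) := by
        refine ⟨Set.inter_subset_right, ⟨hG.1.top_mem, h.range_top_mem⟩, ?_⟩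
        rintro a b ⟨haG, _⟩ hbS ⟨habG, _⟩
        exact ⟨hG.1.mp a b haG habG, hbS⟩
      have hG'ne : G ∩ Set.range τ ≠ {top} := by
        intro hE
        have : τ g ∈ G ∩ Set.range τ := ⟨hτgG, ⟨g, rfl⟩⟩
        rw [hE] at this
        exact hτgne this
      have hFG : F ⊆ G := (hFmin _ hG'on hG'ne).trans Set.inter_subset_left
      rintro b ⟨f, hf, hfb⟩
      exact hG.1.mem_of_mvle (hFG hf) hfb
  · -- Case B : F_τ(A) ≠ {1}; its minimal filter works
    obtain ⟨F, hFon, hFne, hFmin⟩ := h2.resolve_left hk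
    obtain ⟨hFS, hFtop, hFmp⟩ := hFon
    refine ⟨F, ⟨⟨hFtop, ?_⟩, ?_⟩, hFne, ?_⟩
    · -- F is an MV-filter of A
      intro a b ha hab
      have haS : τ a = top := hFS ha
      have habS : τ (imp a b) = top := hFS hab
      have hbS : τ b = top := by
        have h5 : τ (odot a (imp a b)) = top := h.tau_odot_top haS habS
        have h6 := h.tau_mono (odot_imp_mvle a b)
        rw [h5] at h6
        exact eq_top_of_top_mvle h6
      exact hFmp a b ha hbS hab
    · -- F is closed under τ
      intro a haF
      have haS : τ a = top := hFS haF
      rw [haS]; exact hFtop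
    · -- minimality
      intro G hG hGne
      have hG'on : IsFilterOn (tauKernel τ) (G ∩ tauKernel τ) := by
        refine ⟨Set.inter_subset_right, ⟨hG.1.top_mem, show τ top = top from h.map_top⟩, ?_⟩
        rintro a b ⟨haG, _⟩ hbS ⟨habG, _⟩
        exact ⟨hG.1.mp a b haG habG, hbS⟩
      have hG'ne : G ∩ tauKernel τ ≠ {top} := by
        obtain ⟨g, hgG, hgne⟩ := exists_ne_top hG.1.top_mem hGne
        by_cases hgk : τ g = top
        · intro hE
          have : g ∈ G ∩ tauKernel τ := ⟨hgG, hgk⟩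
          rw [hE] at this
          exact hgne this
        · obtain ⟨x0, hx0F, hx0⟩ := exists_ne_top hFtop hFne
          have hx0S : x0 ∈ tauKernel τ := hFS hx0F
          have hyG : τ g ∈ G := hG.2 g hgG
          have hzK : mvsup x0 (τ g) ∈ tauKernel τ := by
            have h6 := h.tau_mono (mvle_mvsup_left x0 (τ g))
            rw [show τ x0 = top from hx0S] at h6
            exact eq_top_of_top_mvle h6
          have hzG : mvsup x0 (τ g) ∈ G :=
            hG.1.mem_of_mvle hyG (mvle_mvsup_right x0 (τ g))
          intro hE
          have hz : mvsup x0 (τ g) ∈ G ∩ tauKernel τ := ⟨hzG, hzK⟩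
          rw [hE] at hz
          rcases h3 x0 (τ g) hx0S ⟨g, rfl⟩ hz with h7 | h7
          · exact hx0 h7
          · exact hgk h7
      exact (hFmin _ hG'on hG'ne).trans Set.inter_subset_left
end
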